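/- arXiv:1908.05209 — 3 statements merged into one kernel-verified Lean document; each statement's English description precedes it below -/
import Mathlib

section
/- If the standard-form SDP (minimize Tr(CX) over real symmetric n×n matrices X subject to Tr(A_iX) = b_i for i = 1,…,m and X positive semidefinite) is feasible and attains its optimal value, then there exists an optimal solution X whose rank r satisfies r(r+1)/2 ≤ m. -/
open Matrix

namespace SdpLowRank

private lemma dot_diag {n : ℕ} (s x z : Fin n → ℝ) :
    x ⬝ᵥ (Matrix.diagonal s *ᵥ z) = (Matrix.diagonal s *ᵥ x) ⬝ᵥ z := by
  simp only [dotProduct, mulVec_diagonal]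
  exact Finset.sum_congr rfl fun i _ => by ring

private lemma reduce_aux {n m : ℕ}
    (C : Matrix (Fin n) (Fin n) ℝ)
    (A : Fin m → Matrix (Fin n) (Fin n) ℝ) (b : Fin m → ℝ)
    (X : Matrix (Fin n) (Fin n) ℝ) (hX : X.PosSemidef)
    (hfeas : ∀ i, (A i * X).trace = b i)
    (hopt : ∀ Y : Matrix (Fin n) (Fin n) ℝ, Y.PosSemidef → (∀ i, (A i * Y).trace = b i) →
        (C * X).trace ≤ (C * Y).trace)
    (U : Matrix (Fin n) (Fin n) ℝ) (hUU : U * star U = 1)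
    (d : Fin n → ℝ) (hd0 : ∀ i, 0 ≤ d i)
    (hspec : X = U * Matrix.diagonal d * star U)
    (hrank : X.rank = Fintype.card {i : Fin n // d i ≠ 0})
    (E : Matrix (Fin n) (Fin n) ℝ) (hET : Eᵀ = E)
    (hEsupp : ∀ i j, d i = 0 ∨ d j = 0 → E i j = 0)
    (hEker : ∀ k, (A k * (U * E * star U)).trace = 0)
    (hEneg : ∃ x, x ⬝ᵥ E *ᵥ x < 0) :
    ∃ X' : Matrix (Fin n) (Fin n) ℝ, X'.PosSemidef ∧ (∀ i, (A i * X').trace = b i) ∧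
      (C * X').trace = (C * X).trace ∧ X'.rank < X.rank := by
  classical
  set s : Fin n → ℝ := fun i => Real.sqrt (d i) with hsdef
  set D : Matrix (Fin n) (Fin n) ℝ := Matrix.diagonal s with hDdef
  set F : Matrix (Fin n) (Fin n) ℝ := U * E * star U with hFdef
  have hsnn : ∀ i, 0 ≤ s i := fun i => Real.sqrt_nonneg _
  have hsne : ∀ i, d i ≠ 0 → s i ≠ 0 := fun i hi =>
    Real.sqrt_ne_zero'.mpr (lt_of_le_of_ne (hd0 i) (Ne.symm hi))
  have hssq : ∀ i, s i * s i = d i := fun i => Real.mul_self_sqrt (hd0 i)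
  set N : Matrix (Fin n) (Fin n) ℝ := Matrix.of fun i j =>
    if d i ≠ 0 ∧ d j ≠ 0 then E i j / (s i * s j) else 0 with hNdef
  have hNsupp : ∀ i j, d i = 0 ∨ d j = 0 → N i j = 0 := by
    intro i j h
    show (if d i ≠ 0 ∧ d j ≠ 0 then E i j / (s i * s j) else 0) = 0
    rw [if_neg]; tauto
  have hEapp : ∀ i j, E j i = E i j := fun i j => congrFun (congrFun hET i) j
  have hNsym : N.IsHermitian := by
    ext i j
    show star (N j i) = N i j
    rw [star_trivial]
    show (if d j ≠ 0 ∧ d i ≠ 0 then E j i / (s j * s i) else 0)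
        = (if d i ≠ 0 ∧ d j ≠ 0 then E i j / (s i * s j) else 0)
    rw [hEapp, mul_comm (s j)]
    by_cases h1 : d i ≠ 0 ∧ d j ≠ 0
    · rw [if_pos ⟨h1.2, h1.1⟩, if_pos h1]
    · rw [if_neg (fun h => h1 ⟨h.2, h.1⟩), if_neg h1]
  have hDND : D * N * D = E := by
    ext i j
    rw [Matrix.mul_diagonal, Matrix.diagonal_mul]
    show s i * (if d i ≠ 0 ∧ d j ≠ 0 then E i j / (s i * s j) else 0) * s j = E i j
    by_cases h1 : d i ≠ 0 ∧ d j ≠ 0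
    · rw [if_pos h1]
      field_simp [hsne i h1.1, hsne j h1.2]
    · rw [if_neg h1]
      rw [mul_zero, zero_mul]
      rw [eq_comm, hEsupp i j (by tauto)]
  have hD1D : D * 1 * D = Matrix.diagonal d := by
    rw [mul_one, hDdef, diagonal_mul_diagonal]
    all_goals exact congrArg Matrix.diagonal (funext hssq)
  have hDh : Dᴴ = D := by
    rw [hDdef, diagonal_conjTranspose]
    rw [show star s = s from funext fun i => star_trivial _]
  have hconj : ∀ c : ℝ, X + c • F = (U * D) * (1 + c • N) * (D * star U) := by
    intro c
    have h1 : U * D * (1 + c • N) * (D * star U) = U * (D * (1 + c • N) * D) * star U := by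
      noncomm_ring
    have h2 : D * (1 + c • N) * D = Matrix.diagonal d + c • E := by
      rw [Matrix.mul_add, Matrix.add_mul, hD1D, Matrix.mul_smul, Matrix.smul_mul, hDND]
    rw [h1, h2, hspec, hFdef]
    rw [Matrix.mul_add, Matrix.add_mul, Matrix.mul_smul, Matrix.smul_mul]
  -- spectral theory of N
  set μ : Fin n → ℝ := hNsym.eigenvalues with hμdef
  set V : Matrix (Fin n) (Fin n) ℝ := (hNsym.eigenvectorUnitary : Matrix (Fin n) (Fin n) ℝ) with hVdef
  have hVV : V * star V = 1 := Matrix.mem_unitaryGroup_iff.mp hNsym.eigenvectorUnitary.2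
  have hNspec : N = V * Matrix.diagonal μ * star V := by
    have := hNsym.spectral_theorem
    simpa using this
  have hpsd1 : ∀ c : ℝ, (∀ i, 0 ≤ 1 + c * μ i) → (X + c • F).PosSemidef := by
    intro c hc
    rw [hconj c]
    have hB : D * star U = (U * D)ᴴ := by
      rw [conjTranspose_mul, hDh, star_eq_conjTranspose]
    rw [hB]
    apply PosSemidef.mul_mul_conjTranspose_same
    have hdg : (1 : Matrix (Fin n) (Fin n) ℝ) + c • N
        = V * Matrix.diagonal (fun i => 1 + c * μ i) * star V := by
      have h1 : Matrix.diagonal (fun i => 1 + c * μ i)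
          = 1 + c • Matrix.diagonal μ := by
        rw [← Matrix.diagonal_one, ← Matrix.diagonal_smul, ← Matrix.diagonal_add]
        rfl
      rw [h1, Matrix.mul_add, Matrix.add_mul, Matrix.mul_one, hVV,
        Matrix.mul_smul, Matrix.smul_mul, ← hNspec]
    rw [hdg, star_eq_conjTranspose]
    exact (PosSemidef.diagonal (d := fun i => 1 + c * μ i) hc).mul_mul_conjTranspose_same V
  have htr : ∀ (M : Matrix (Fin n) (Fin n) ℝ) (c : ℝ),
      (M * (X + c • F)).trace = (M * X).trace + c * (M * F).trace := by
    intro M c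
    rw [Matrix.mul_add, trace_add, Matrix.mul_smul, trace_smul, smul_eq_mul]
  -- N has a negative eigenvalue
  have hNneg : ∃ i, μ i < 0 := by
    by_contra hcon
    push_neg at hcon
    have hNpsd : N.PosSemidef := hNsym.posSemidef_iff_eigenvalues_nonneg.mpr hcon
    obtain ⟨x, hx⟩ := hEneg
    have hxE : x ⬝ᵥ E *ᵥ x = (D *ᵥ x) ⬝ᵥ N *ᵥ (D *ᵥ x) := by
      rw [← hDND, ← mulVec_mulVec, ← mulVec_mulVec, hDdef, dot_diag]
    have h0 := hNpsd.dotProduct_mulVec_nonneg (D *ᵥ x)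
    rw [star_trivial] at h0
    rw [hxE] at hx
    linarith
  obtain ⟨i₁, hi₁⟩ := hNneg
  obtain ⟨i₀, -, hmin⟩ := Finset.exists_min_image Finset.univ μ ⟨i₁, Finset.mem_univ _⟩
  have hμ0 : μ i₀ < 0 := lt_of_le_of_lt (hmin i₁ (Finset.mem_univ _)) hi₁
  set t : ℝ := -(μ i₀)⁻¹ with htdef
  have ht0 : 0 < t := by
    rw [htdef]
    exact neg_pos.mpr (inv_lt_zero.mpr hμ0)
  have htμ : t * μ i₀ = -1 := by
    rw [htdef, neg_mul, inv_mul_cancel₀ (ne_of_lt hμ0)]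
  -- eigenvector for the most negative eigenvalue
  set w : Fin n → ℝ := (WithLp.equiv 2 _) (hNsym.eigenvectorBasis i₀) with hwdef
  have hNw : N *ᵥ w = μ i₀ • w := hNsym.mulVec_eigenvectorBasis i₀
  have hw0 : w ≠ 0 := by
    intro hcon
    have h1 : ‖hNsym.eigenvectorBasis i₀‖ = 1 := hNsym.eigenvectorBasis.orthonormal.1 i₀
    have h2 : hNsym.eigenvectorBasis i₀ = 0 := by
      have := congrArg (WithLp.equiv 2 ((i : Fin n) → ℝ)).symm hcon
      exact (WithLp.equiv 2 _).injective (hcon.trans (by simp))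
    rw [h2] at h1
    simp at h1
  have hwsupp : ∀ i, d i = 0 → w i = 0 := by
    intro i hi
    have h1 : (N *ᵥ w) i = 0 := by
      show N i ⬝ᵥ w = 0
      apply Finset.sum_eq_zero
      intro j _
      rw [hNsupp i j (Or.inl hi), zero_mul]
    rw [hNw] at h1
    have : μ i₀ * w i = 0 := h1
    rcases mul_eq_zero.mp this with h | h
    · exact absurd h (ne_of_lt hμ0)
    · exact h
  set v : Fin n → ℝ := fun i => if d i ≠ 0 then w i / s i else 0 with hvdef
  have hDv : D *ᵥ v = w := by
    funext i
    rw [hDdef, mulVec_diagonal]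
    by_cases hi : d i ≠ 0
    · show s i * (if d i ≠ 0 then w i / s i else 0) = w i
      rw [if_pos hi, mul_comm, div_mul_cancel₀ _ (hsne i hi)]
    · push_neg at hi
      show s i * (if d i ≠ 0 then w i / s i else 0) = w i
      rw [if_neg (by simpa using hi), mul_zero, eq_comm]
      exact hwsupp i hi
  have hv0 : v ≠ 0 := fun h => hw0 (by rw [← hDv, h, mulVec_zero])
  have hvsupp : ∀ i, d i = 0 → v i = 0 := by
    intro i hi
    show (if d i ≠ 0 then w i / s i else 0) = 0
    rw [if_neg (by simpa using hi)]
  set M' : Matrix (Fin n) (Fin n) ℝ := Matrix.diagonal d + t • E with hM'def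
  have hM'conj : M' = D * (1 + t • N) * D := by
    rw [hM'def, Matrix.mul_add, Matrix.add_mul, hD1D, Matrix.mul_smul, Matrix.smul_mul, hDND]
  have hGw : (1 + t • N) *ᵥ w = 0 := by
    rw [add_mulVec, one_mulVec, smul_mulVec, hNw, smul_smul, htμ]
    simp
  have hM'v : M' *ᵥ v = 0 := by
    rw [hM'conj, ← mulVec_mulVec, ← mulVec_mulVec, hDv, hGw, mulVec_zero]
  have hM'supp : ∀ i j, d i = 0 → M' i j = 0 := by
    intro i j hi
    rw [hM'def]
    show Matrix.diagonal d i j + t * E i j = 0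
    rw [hEsupp i j (Or.inl hi), mul_zero, add_zero, Matrix.diagonal_apply]
    split
    · exact hi
    · rfl
  have hM'T : M'ᵀ = M' := by
    rw [hM'def, Matrix.transpose_add, Matrix.transpose_smul, hET, Matrix.diagonal_transpose]
  have hψ : ∀ i, 0 ≤ 1 + t * μ i := by
    intro i
    have h1 : t * μ i₀ ≤ t * μ i := mul_le_mul_of_nonneg_left (hmin i (Finset.mem_univ _)) ht0.le
    rw [htμ] at h1
    linarith
  have hXtF : (X + t • F).PosSemidef := hpsd1 t hψ
  have hfeas' : ∀ k, (A k * (X + t • F)).trace = b k := by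
    intro k
    rw [htr, hEker k, mul_zero, add_zero, hfeas]
  -- (C * F).trace = 0
  have hCF : (C * F).trace = 0 := by
    obtain ⟨σ, hσ0, hσ1, hσ2⟩ : ∃ σ : ℝ, 0 < σ ∧ (∀ i, 0 ≤ 1 + σ * μ i) ∧
        (∀ i, 0 ≤ 1 + (-σ) * μ i) := by
      set ρ : ℝ := Finset.univ.sup' ⟨i₀, Finset.mem_univ _⟩ (fun i => |μ i|) with hρdef
      have hρ0 : 0 ≤ ρ := le_trans (abs_nonneg (μ i₀)) (Finset.le_sup' (fun i => |μ i|) (Finset.mem_univ i₀))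
      have key : ∀ i, (1 + ρ)⁻¹ * |μ i| ≤ 1 := by
        intro i
        have h2 : |μ i| ≤ ρ := Finset.le_sup' (fun i => |μ i|) (Finset.mem_univ i)
        have h3 : (1 + ρ)⁻¹ * |μ i| ≤ (1 + ρ)⁻¹ * (1 + ρ) :=
          mul_le_mul_of_nonneg_left (by linarith) (by positivity)
        rwa [inv_mul_cancel₀ (by positivity)] at h3
      refine ⟨(1 + ρ)⁻¹, by positivity, fun i => ?_, fun i => ?_⟩
      · rcases abs_le.mp ((abs_mul _ _).trans_le (by
          rw [abs_of_pos (by positivity : (0:ℝ) < (1 + ρ)⁻¹)]; exact key i) :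
          |(1 + ρ)⁻¹ * μ i| ≤ 1) with ⟨h4, h5⟩
        linarith
      · rcases abs_le.mp ((abs_mul _ _).trans_le (by
          rw [abs_of_pos (by positivity : (0:ℝ) < (1 + ρ)⁻¹)]; exact key i) :
          |(1 + ρ)⁻¹ * μ i| ≤ 1) with ⟨h4, h5⟩
        nlinarith
    have h1 := hopt (X + σ • F) (hpsd1 σ hσ1)
      (fun k => by rw [htr, hEker k, mul_zero, add_zero, hfeas])
    have h2 := hopt (X + (-σ) • F) (hpsd1 (-σ) hσ2)
      (fun k => by rw [htr, hEker k, mul_zero, add_zero, hfeas])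
    rw [htr] at h1 h2
    nlinarith
  refine ⟨X + t • F, hXtF, hfeas', by rw [htr, hCF, mul_zero, add_zero], ?_⟩
  -- rank computation
  have hXF : X + t • F = U * M' * star U := by
    rw [hM'def, hspec, hFdef, Matrix.mul_add, Matrix.add_mul, Matrix.mul_smul, Matrix.smul_mul]
  have hdetU : IsUnit U.det ∧ IsUnit (star U).det := by
    have h1 : U.det * (star U).det = 1 := by rw [← det_mul, hUU, det_one]
    exact ⟨IsUnit.of_mul_eq_one _ h1, IsUnit.of_mul_eq_one _ (by rwa [mul_comm] at h1)⟩
  have hr1 : (X + t • F).rank = M'.rank := by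
    rw [hXF, Matrix.rank_mul_eq_left_of_isUnit_det (star U) (U * M') hdetU.2,
      Matrix.rank_mul_eq_right_of_isUnit_det U M' hdetU.1]
  rw [hr1, hrank]
  -- bound rank of M'
  set Us : Submodule ℝ (Fin n → ℝ) :=
    { carrier := {u | ∀ i, d i = 0 → u i = 0}
      add_mem' := fun ha hb i hi => by
        rw [Pi.add_apply, ha i hi, hb i hi, add_zero]
      zero_mem' := fun i _ => rfl
      smul_mem' := fun c u hu i hi => by
        rw [Pi.smul_apply, hu i hi, smul_zero] } with hUsdef
  have hUsrank : Module.finrank ℝ Us = Fintype.card {i : Fin n // d i ≠ 0} := by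
    let φ : Us →ₗ[ℝ] ({i : Fin n // d i ≠ 0} → ℝ) :=
      { toFun := fun u j => (u : Fin n → ℝ) j.1
        map_add' := fun a b => rfl
        map_smul' := fun c a => rfl }
    have hbij : Function.Bijective φ := by
      constructor
      · intro a b hab
        apply Subtype.ext
        funext i
        by_cases hi : d i = 0
        · rw [a.2 i hi, b.2 i hi]
        · exact congrFun hab ⟨i, hi⟩
      · intro g
        refine ⟨⟨fun i => if h : d i ≠ 0 then g ⟨i, h⟩ else 0, fun i hi => by simp [hi]⟩, ?_⟩
        funext j
        show (if h : d j.1 ≠ 0 then g ⟨j.1, h⟩ else 0) = g j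
        rw [dif_pos j.2]
    exact (LinearEquiv.ofBijective φ hbij).finrank_eq.trans
      (Module.finrank_fintype_fun_eq_card ℝ)
  let f : (Fin n → ℝ) →ₗ[ℝ] ℝ :=
    { toFun := fun u => v ⬝ᵥ u
      map_add' := fun a b => dotProduct_add _ _ _
      map_smul' := fun c a => by simp [dotProduct_smul] }
  set W : Submodule ℝ (Fin n → ℝ) := Us ⊓ LinearMap.ker f with hWdef
  have hrange : LinearMap.range M'.mulVecLin ≤ W := by
    rintro _ ⟨u, rfl⟩
    constructor
    · intro i hi
      show (M' *ᵥ u) i = 0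
      show M' i ⬝ᵥ u = 0
      apply Finset.sum_eq_zero
      intro j _
      rw [hM'supp i j hi, zero_mul]
    · show v ⬝ᵥ (M' *ᵥ u) = 0
      rw [dotProduct_mulVec]
      have hvM : v ᵥ* M' = 0 := by
        rw [← mulVec_transpose, hM'T, hM'v]
      rw [hvM, zero_dotProduct]
  have hvUs : v ∈ Us := hvsupp
  have hvW : v ∉ W := by
    intro h
    have h2 : v ⬝ᵥ v = 0 := h.2
    exact hv0 (dotProduct_self_eq_zero.mp h2)
  have hWlt : W < Us := lt_of_le_of_ne inf_le_left (fun h => hvW (h ▸ hvUs))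
  have hle : M'.rank ≤ Module.finrank ℝ W := by
    rw [Matrix.rank]
    exact Submodule.finrank_mono hrange
  have hlt : Module.finrank ℝ W < Module.finrank ℝ Us := Submodule.finrank_lt_finrank_of_lt hWlt
  rw [← hUsrank]
  omega

private lemma reduce {n m : ℕ}
    (C : Matrix (Fin n) (Fin n) ℝ)
    (A : Fin m → Matrix (Fin n) (Fin n) ℝ) (b : Fin m → ℝ)
    (X : Matrix (Fin n) (Fin n) ℝ) (hX : X.PosSemidef)
    (hfeas : ∀ i, (A i * X).trace = b i)
    (hopt : ∀ Y : Matrix (Fin n) (Fin n) ℝ, Y.PosSemidef → (∀ i, (A i * Y).trace = b i) →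
        (C * X).trace ≤ (C * Y).trace)
    (hbig : 2 * m < X.rank * (X.rank + 1)) :
    ∃ X' : Matrix (Fin n) (Fin n) ℝ, X'.PosSemidef ∧ (∀ i, (A i * X').trace = b i) ∧
      (C * X').trace = (C * X).trace ∧ X'.rank < X.rank := by
  classical
  have hXh : X.IsHermitian := hX.1
  set d : Fin n → ℝ := hXh.eigenvalues with hddef
  set U : Matrix (Fin n) (Fin n) ℝ := (hXh.eigenvectorUnitary : Matrix (Fin n) (Fin n) ℝ)
    with hUdef
  have hUU : U * star U = 1 := Matrix.mem_unitaryGroup_iff.mp hXh.eigenvectorUnitary.2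
  have hspec : X = U * Matrix.diagonal d * star U := by
    have := hXh.spectral_theorem
    simpa using this
  have hd0 : ∀ i, 0 ≤ d i := hX.eigenvalues_nonneg
  have hrank : X.rank = Fintype.card {i : Fin n // d i ≠ 0} := hXh.rank_eq_card_non_zero_eigs
  -- the parametrized family of perturbation directions
  let Emap : (Sym2 {i : Fin n // d i ≠ 0} → ℝ) →ₗ[ℝ] Matrix (Fin n) (Fin n) ℝ :=
    { toFun := fun e => Matrix.of fun i j =>
        if hi : d i ≠ 0 then if hj : d j ≠ 0 then e (Sym2.mk ⟨i, hi⟩ ⟨j, hj⟩) else 0 else 0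
      map_add' := by
        intro e f
        ext i j
        show (if hi : d i ≠ 0 then if hj : d j ≠ 0 then (e + f) (Sym2.mk ⟨i, hi⟩ ⟨j, hj⟩)
            else 0 else 0) = _
        rw [Matrix.add_apply]
        show _ = (if hi : d i ≠ 0 then if hj : d j ≠ 0 then e (Sym2.mk ⟨i, hi⟩ ⟨j, hj⟩)
            else 0 else 0) + (if hi : d i ≠ 0 then if hj : d j ≠ 0 then
            f (Sym2.mk ⟨i, hi⟩ ⟨j, hj⟩) else 0 else 0)
        split_ifs <;> simp
      map_smul' := by
        intro c e
        ext i j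
        show (if hi : d i ≠ 0 then if hj : d j ≠ 0 then (c • e) (Sym2.mk ⟨i, hi⟩ ⟨j, hj⟩)
            else 0 else 0) = _
        rw [RingHom.id_apply, Matrix.smul_apply]
        show _ = c • (if hi : d i ≠ 0 then if hj : d j ≠ 0 then
            e (Sym2.mk ⟨i, hi⟩ ⟨j, hj⟩) else 0 else 0)
        split_ifs <;> simp }
  let Φ : (Sym2 {i : Fin n // d i ≠ 0} → ℝ) →ₗ[ℝ] (Fin m → ℝ) :=
    { toFun := fun e k => (A k * (U * Emap e * star U)).trace
      map_add' := by
        intro e f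
        funext k
        simp [map_add, Matrix.mul_add, Matrix.add_mul, Matrix.trace_add]
      map_smul' := by
        intro c e
        funext k
        simp [Emap.map_smul, Matrix.mul_smul, Matrix.smul_mul, Matrix.trace_smul] }
  have hcard : m < Fintype.card (Sym2 {i : Fin n // d i ≠ 0}) := by
    rw [Sym2.card, ← hrank, Nat.choose_two_right]
    obtain ⟨k, hk⟩ : Even (X.rank * (X.rank + 1)) := Nat.even_mul_succ_self _
    have h1 : (X.rank + 1) * (X.rank + 1 - 1) = k + k := by
      rw [Nat.add_sub_cancel, Nat.mul_comm]
      exact hk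
    rw [h1]
    omega
  have hker : ∃ e : Sym2 {i : Fin n // d i ≠ 0} → ℝ, e ≠ 0 ∧ Φ e = 0 := by
    have hne : LinearMap.ker Φ ≠ ⊥ := by
      apply LinearMap.ker_ne_bot_of_finrank_lt
      rw [Module.finrank_fintype_fun_eq_card, Module.finrank_fintype_fun_eq_card]
      simpa using hcard
    obtain ⟨e, he, h0⟩ := Submodule.exists_mem_ne_zero_of_ne_bot hne
    exact ⟨e, h0, he⟩
  obtain ⟨e, he0, heker⟩ := hker
  have hT : ∀ e, (Emap e)ᵀ = Emap e := by
    intro e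
    ext i j
    show (if hj : d j ≠ 0 then if hi : d i ≠ 0 then e (Sym2.mk ⟨j, hj⟩ ⟨i, hi⟩) else 0 else 0)
        = (if hi : d i ≠ 0 then if hj : d j ≠ 0 then e (Sym2.mk ⟨i, hi⟩ ⟨j, hj⟩) else 0 else 0)
    by_cases hi : d i ≠ 0 <;> by_cases hj : d j ≠ 0 <;> simp [hi, hj]
    rw [Sym2.eq_swap]
  have hsupp : ∀ e i j, d i = 0 ∨ d j = 0 → Emap e i j = 0 := by
    intro e i j h
    show (if hi : d i ≠ 0 then if hj : d j ≠ 0 then e (Sym2.mk ⟨i, hi⟩ ⟨j, hj⟩) else 0 else 0)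
        = 0
    rcases h with h | h
    · rw [dif_neg (by simpa using h)]
    · by_cases hi : d i ≠ 0
      · rw [dif_pos hi, dif_neg (by simpa using h)]
      · rw [dif_neg hi]
  have hherm : ∀ e, (Emap e).IsHermitian := by
    intro e
    have h1 : (Emap e)ᴴ = (Emap e)ᵀ := by
      ext i j
      simp [conjTranspose_apply]
    exact h1.trans (hT e)
  have hkerE : ∀ k, (A k * (U * Emap e * star U)).trace = 0 := fun k => congrFun heker k
  by_cases hneg : ∃ x, x ⬝ᵥ (Emap e) *ᵥ x < 0
  · exact reduce_aux C A b X hX hfeas hopt U hUU d hd0 hspec hrank (Emap e) (hT e) (hsupp e)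
      hkerE hneg
  · have hneg' : ∃ x, x ⬝ᵥ (Emap (-e)) *ᵥ x < 0 := by
      by_contra hneg2
      push_neg at hneg hneg2
      have hpsd : (Emap e).PosSemidef := PosSemidef.of_dotProduct_mulVec_nonneg (hherm e) fun x => by simpa using hneg x
      have hpsd' : (Emap (-e)).PosSemidef := PosSemidef.of_dotProduct_mulVec_nonneg (hherm (-e)) fun x => by simpa using hneg2 x
      have hzero : Emap e = 0 := by
        have hmv : ∀ x, (Emap e) *ᵥ x = 0 := by
          intro x
          have h1 : x ⬝ᵥ (Emap e) *ᵥ x = 0 := by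
            have h2 := hneg x
            have h3 := hneg2 x
            rw [map_neg, Matrix.neg_mulVec, dotProduct_neg] at h3
            linarith
          have := (hpsd.dotProduct_mulVec_zero_iff x).mp (by rwa [star_trivial])
          exact this
        ext i j
        have := congrFun (hmv (Pi.single j 1)) i
        rwa [mulVec_single_one] at this
      exact he0 (by
        have : ∀ z, e z = 0 := by
          intro z
          induction z using Sym2.ind with
          | _ a b =>
            have h1 : Emap e a.1 b.1 = e (Sym2.mk a b) := by
              show (if hi : d a.1 ≠ 0 then if hj : d b.1 ≠ 0 then
                  e (Sym2.mk ⟨a.1, hi⟩ ⟨b.1, hj⟩) else 0 else 0) = e (Sym2.mk a b)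
              rw [dif_pos a.2, dif_pos b.2]
            rw [hzero] at h1
            simpa using h1.symm
        funext z
        exact this z)
    have h0' : Φ (-e) = 0 := by rw [map_neg, heker, neg_zero]
    exact reduce_aux C A b X hX hfeas hopt U hUU d hd0 hspec hrank (Emap (-e)) (hT (-e))
      (hsupp (-e)) (fun k => congrFun h0' k) hneg'

theorem main (n m : ℕ) (C : Matrix (Fin n) (Fin n) ℝ)
    (A : Fin m → Matrix (Fin n) (Fin n) ℝ)
    (b : Fin m → ℝ)
    (hattained : ∃ X : Matrix (Fin n) (Fin n) ℝ,
      (X.PosSemidef ∧ ∀ i, (A i * X).trace = b i) ∧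
      ∀ Y : Matrix (Fin n) (Fin n) ℝ, Y.PosSemidef → (∀ i, (A i * Y).trace = b i) →
        (C * X).trace ≤ (C * Y).trace) :
    ∃ X : Matrix (Fin n) (Fin n) ℝ,
      (X.PosSemidef ∧ ∀ i, (A i * X).trace = b i) ∧
      (∀ Y : Matrix (Fin n) (Fin n) ℝ, Y.PosSemidef → (∀ i, (A i * Y).trace = b i) →
        (C * X).trace ≤ (C * Y).trace) ∧
      X.rank * (X.rank + 1) ≤ 2 * m := by
  classical
  obtain ⟨X₀, ⟨hX₀p, hX₀f⟩, hX₀o⟩ := hattained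
  let P : ℕ → Prop := fun k => ∃ X : Matrix (Fin n) (Fin n) ℝ,
    (X.PosSemidef ∧ ∀ i, (A i * X).trace = b i) ∧
    (∀ Y : Matrix (Fin n) (Fin n) ℝ, Y.PosSemidef → (∀ i, (A i * Y).trace = b i) →
      (C * X).trace ≤ (C * Y).trace) ∧ X.rank = k
  have hP : ∃ k, P k := ⟨X₀.rank, X₀, ⟨hX₀p, hX₀f⟩, hX₀o, rfl⟩
  obtain ⟨X, ⟨hXp, hXf⟩, hXo, hXr⟩ := Nat.find_spec hP
  refine ⟨X, ⟨hXp, hXf⟩, hXo, ?_⟩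
  by_contra hbig
  push_neg at hbig
  obtain ⟨X', h1, h2, h3, h4⟩ := reduce C A b X hXp hXf hXo hbig
  have hP' : P X'.rank := ⟨X', ⟨h1, h2⟩, fun Y hY hYf => by rw [h3]; exact hXo Y hY hYf, rfl⟩
  have hle := Nat.find_le (h := hP) hP'
  omega

end SdpLowRank

/-- If the standard-form SDP (minimize `Tr(CX)` over real symmetric `n × n` matrices `X`
subject to `Tr(Aᵢ X) = bᵢ` for `i = 1,…,m` and `X ⪰ 0`) is feasible and attains its optimal
value, then there exists an optimal solution `X` whose rank `r` satisfies `r(r+1)/2 ≤ m`. -/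
theorem sdp_exists_low_rank_optimal_solution
    (n m : ℕ) (C : Matrix (Fin n) (Fin n) ℝ) (hC : C.IsSymm)
    (A : Fin m → Matrix (Fin n) (Fin n) ℝ) (hA : ∀ i, (A i).IsSymm)
    (b : Fin m → ℝ)
    (hattained : ∃ X : Matrix (Fin n) (Fin n) ℝ,
      (X.PosSemidef ∧ ∀ i, (A i * X).trace = b i) ∧
      ∀ Y : Matrix (Fin n) (Fin n) ℝ, Y.PosSemidef → (∀ i, (A i * Y).trace = b i) →
        (C * X).trace ≤ (C * Y).trace) :
    ∃ X : Matrix (Fin n) (Fin n) ℝ,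
      (X.PosSemidef ∧ ∀ i, (A i * X).trace = b i) ∧
      (∀ Y : Matrix (Fin n) (Fin n) ℝ, Y.PosSemidef → (∀ i, (A i * Y).trace = b i) →
        (C * X).trace ≤ (C * Y).trace) ∧
      X.rank * (X.rank + 1) ≤ 2 * m :=
  SdpLowRank.main n m C A b hattained
end

section
/- Every extreme point X of the spectrahedron {X ∈ S^n : Tr(A_iX) = b_i for i = 1,…,m, X positive semidefinite} has rank r satisfying r(r+1)/2 ≤ m. -/
open Matrix Finset

/-- Index type for upper-triangular positions. -/
abbrev SpecAux.symIdx (r : ℕ) := {p : Fin r × Fin r // p.1 ≤ p.2}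

namespace SpecAux

/-- Build a symmetric matrix from upper-triangular data. -/
def symOf {r : ℕ} (f : symIdx r → ℝ) : Matrix (Fin r) (Fin r) ℝ :=
  Matrix.of fun i j =>
    if h : i ≤ j then f ⟨(i, j), h⟩ else f ⟨(j, i), le_of_not_ge h⟩

lemma symOf_apply_le {r : ℕ} (f : symIdx r → ℝ) {i j : Fin r} (h : i ≤ j) :
    symOf f i j = f ⟨(i, j), h⟩ := dif_pos h

lemma symOf_transpose {r : ℕ} (f : symIdx r → ℝ) : (symOf f)ᵀ = symOf f := by
  ext i j
  show symOf f j i = symOf f i j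
  unfold symOf
  by_cases h : i ≤ j
  · by_cases h' : j ≤ i
    · obtain rfl : i = j := le_antisymm h h'
      simp
    · simp only [of_apply, dif_neg h', dif_pos h]
  · simp only [of_apply, dif_pos (le_of_not_ge h), dif_neg h]

lemma symOf_add {r : ℕ} (f g : symIdx r → ℝ) : symOf (f + g) = symOf f + symOf g := by
  ext i j
  by_cases h : i ≤ j <;> simp [symOf, h]

lemma symOf_smul {r : ℕ} (c : ℝ) (f : symIdx r → ℝ) : symOf (c • f) = c • symOf f := by
  ext i j
  by_cases h : i ≤ j <;> simp [symOf, h]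

lemma symOf_eq_zero {r : ℕ} {f : symIdx r → ℝ} (h : symOf f = 0) : f = 0 := by
  funext v
  obtain ⟨⟨i, j⟩, hij⟩ := v
  have := congrFun (congrFun h i) j
  simpa [symOf, hij] using this

lemma quad_abs_le {r : ℕ} (B : Matrix (Fin r) (Fin r) ℝ) (x : Fin r → ℝ) :
    |x ⬝ᵥ B *ᵥ x| ≤ (∑ i, ∑ j, |B i j|) * (∑ k, x k ^ 2) := by
  have hx : ∀ i j, |x i * x j| ≤ ∑ k, x k ^ 2 := by
    intro i j
    have h1 : x i ^ 2 ≤ ∑ k, x k ^ 2 :=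
      Finset.single_le_sum (fun k _ => sq_nonneg (x k)) (mem_univ i)
    have h2 : x j ^ 2 ≤ ∑ k, x k ^ 2 :=
      Finset.single_le_sum (fun k _ => sq_nonneg (x k)) (mem_univ j)
    have := abs_mul (x i) (x j)
    nlinarith [sq_abs (x i), sq_abs (x j), abs_nonneg (x i), abs_nonneg (x j),
      sq_nonneg (|x i| - |x j|)]
  have hexp : x ⬝ᵥ B *ᵥ x = ∑ i, ∑ j, x i * B i j * x j := by
    simp only [dotProduct, mulVec, Finset.mul_sum]
    exact Finset.sum_congr rfl fun i _ => Finset.sum_congr rfl fun j _ => by ring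
  rw [hexp]
  calc |∑ i, ∑ j, x i * B i j * x j| ≤ ∑ i, |∑ j, x i * B i j * x j| :=
        Finset.abs_sum_le_sum_abs _ _
    _ ≤ ∑ i, ∑ j, |x i * B i j * x j| :=
        Finset.sum_le_sum fun i _ => Finset.abs_sum_le_sum_abs _ _
    _ ≤ ∑ i, ∑ j, |B i j| * (∑ k, x k ^ 2) := by
        refine Finset.sum_le_sum fun i _ => Finset.sum_le_sum fun j _ => ?_
        have : |x i * B i j * x j| = |B i j| * |x i * x j| := by
          rw [show x i * B i j * x j = B i j * (x i * x j) by ring, abs_mul]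
        rw [this]
        exact mul_le_mul_of_nonneg_left (hx i j) (abs_nonneg _)
    _ = (∑ i, ∑ j, |B i j|) * (∑ k, x k ^ 2) := by
        rw [Finset.sum_mul]
        exact Finset.sum_congr rfl fun i _ => (Finset.sum_mul _ _ _).symm

lemma diagonal_add_posSemidef {r : ℕ} (D : Fin r → ℝ) (B : Matrix (Fin r) (Fin r) ℝ)
    (hB : Bᵀ = B) (c : ℝ) (hc : ∀ j, c ≤ D j) (hbound : ∑ i, ∑ j, |B i j| ≤ c) :
    (Matrix.diagonal D + B).PosSemidef := by
  rw [posSemidef_iff_dotProduct_mulVec]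
  constructor
  · show (Matrix.diagonal D + B)ᴴ = _
    rw [conjTranspose_eq_transpose_of_trivial, transpose_add, diagonal_transpose, hB]
  · intro x
    have hstar : star x = x := star_trivial x
    rw [hstar, add_mulVec, dotProduct_add]
    have hdiag : x ⬝ᵥ Matrix.diagonal D *ᵥ x = ∑ j, D j * x j ^ 2 := by
      simp only [dotProduct, mulVec_diagonal]
      exact Finset.sum_congr rfl fun j _ => by ring
    rw [hdiag]
    have hT : (0:ℝ) ≤ ∑ k, x k ^ 2 := Finset.sum_nonneg fun k _ => sq_nonneg _
    have h1 : c * (∑ k, x k ^ 2) ≤ ∑ j, D j * x j ^ 2 := by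
      rw [Finset.mul_sum]
      exact Finset.sum_le_sum fun j _ => mul_le_mul_of_nonneg_right (hc j) (sq_nonneg _)
    have h2 : |x ⬝ᵥ B *ᵥ x| ≤ c * (∑ k, x k ^ 2) := by
      calc |x ⬝ᵥ B *ᵥ x| ≤ (∑ i, ∑ j, |B i j|) * (∑ k, x k ^ 2) := quad_abs_le B x
        _ ≤ c * (∑ k, x k ^ 2) := mul_le_mul_of_nonneg_right hbound hT
    have := abs_le.mp h2
    linarith [this.1]

lemma two_mul_card_symIdx (r : ℕ) : 2 * Fintype.card (symIdx r) = r * (r + 1) := by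
  have h1 : Fintype.card (symIdx r)
      = (Finset.univ.filter (fun p : Fin r × Fin r => p.1 ≤ p.2)).card :=
    Fintype.card_subtype _
  have h2 : (Finset.univ.filter (fun p : Fin r × Fin r => p.1 ≤ p.2)).card
      = ∑ j : Fin r, ((j : ℕ) + 1) := by
    rw [Finset.card_filter]
    rw [← Finset.univ_product_univ, Finset.sum_product]
    rw [Finset.sum_comm]
    refine Finset.sum_congr rfl fun j _ => ?_
    have : (∑ i : Fin r, if i ≤ j then (1:ℕ) else 0)
        = (Finset.univ.filter (fun i : Fin r => i ≤ j)).card := (Finset.card_filter _ _).symm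
    rw [this]
    have : Finset.univ.filter (fun i : Fin r => i ≤ j) = Finset.Iic j := by
      ext i; simp
    rw [this, Fin.card_Iic]
  have h3 : (∑ j : Fin r, ((j : ℕ) + 1)) = (∑ k ∈ range r, k) + r := by
    rw [Fin.sum_univ_eq_sum_range (fun k => k + 1) r, Finset.sum_add_distrib]
    simp
  have h4 := Finset.sum_range_id_mul_two r
  rw [h1, h2, h3]
  rcases r with _ | k
  · simp
  · have h4' : (∑ i ∈ range (k + 1), i) * 2 = (k + 1) * k := by simpa using h4
    calc 2 * ((∑ i ∈ range (k + 1), i) + (k + 1))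
        = (∑ i ∈ range (k + 1), i) * 2 + 2 * (k + 1) := by ring
      _ = (k + 1) * k + 2 * (k + 1) := by rw [h4']
      _ = (k + 1) * (k + 1 + 1) := by ring

end SpecAux

open SpecAux in
/-- Every extreme point `X` of the spectrahedron
`{X ∈ Sⁿ : Tr(Aᵢ X) = bᵢ for i = 1,…,m, X ⪰ 0}` has rank `r` satisfying `r(r+1)/2 ≤ m`. -/
theorem spectrahedron_extreme_point_rank_bound
    (n m : ℕ) (A : Fin m → Matrix (Fin n) (Fin n) ℝ) (hA : ∀ i, (A i).IsSymm)
    (b : Fin m → ℝ) (X : Matrix (Fin n) (Fin n) ℝ)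
    (hX : X ∈ Set.extremePoints ℝ
      {Y : Matrix (Fin n) (Fin n) ℝ | Y.PosSemidef ∧ ∀ i, (A i * Y).trace = b i}) :
    X.rank * (X.rank + 1) ≤ 2 * m := by
  classical
  obtain ⟨⟨hXpsd, hXtr⟩, hext⟩ := hX
  have hH : X.IsHermitian := hXpsd.1
  set U : Matrix (Fin n) (Fin n) ℝ := (Matrix.IsHermitian.eigenvectorUnitary hH :
    Matrix (Fin n) (Fin n) ℝ) with hU_def
  set lam : Fin n → ℝ := hH.eigenvalues with hlam_def
  set r : ℕ := Fintype.card {i : Fin n // lam i ≠ 0} with hr_def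
  have hrank : X.rank = r := hH.rank_eq_card_non_zero_eigs
  let e : Fin r ≃ {i : Fin n // lam i ≠ 0} := (Fintype.equivFin _).symm
  let P : Matrix (Fin n) (Fin r) ℝ := Matrix.of fun i j => U i (e j)
  let D : Fin r → ℝ := fun j => lam (e j)
  have hDpos : ∀ j, 0 < D j := fun j =>
    lt_of_le_of_ne (hXpsd.eigenvalues_nonneg _) (Ne.symm (e j).2)
  have hUU : star U * U = 1 :=
    Matrix.mem_unitaryGroup_iff'.mp (Matrix.IsHermitian.eigenvectorUnitary hH).2
  have hstarU : star U = Uᵀ := by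
    rw [Matrix.star_eq_conjTranspose, Matrix.conjTranspose_eq_transpose_of_trivial]
  have hspec : X = U * Matrix.diagonal lam * Uᵀ := by
    have h := hH.spectral_theorem
    rw [show (RCLike.ofReal ∘ lam : Fin n → ℝ) = lam from rfl] at h
    rw [← hstarU]
    exact h
  have hXentry : ∀ a c, X a c = ∑ j : Fin r, P a j * D j * P c j := by
    intro a c
    have h1 : X a c = ∑ i : Fin n, U a i * lam i * U c i := by
      rw [hspec, Matrix.mul_apply]
      exact Finset.sum_congr rfl fun i _ => by
        rw [Matrix.mul_diagonal, Matrix.transpose_apply]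
    rw [h1]
    calc ∑ i : Fin n, U a i * lam i * U c i
        = ∑ i ∈ Finset.univ.filter (fun i => lam i ≠ 0), U a i * lam i * U c i := by
          refine (Finset.sum_filter_of_ne (p := fun i => lam i ≠ 0)
            (fun i _ hne hlam0 => hne ?_)).symm
          rw [hlam0]; ring
      _ = ∑ i : {i : Fin n // lam i ≠ 0}, U a i * lam i * U c i :=
          Finset.sum_subtype _ (by simp) _
      _ = ∑ j : Fin r, P a j * D j * P c j :=
          (Equiv.sum_comp e (fun i : {i : Fin n // lam i ≠ 0} => U a i * lam i * U c i)).symm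
  have hX_PDP : X = P * Matrix.diagonal D * Pᵀ := by
    ext a c
    rw [hXentry a c, Matrix.mul_apply]
    exact (Finset.sum_congr rfl fun j _ => by
      rw [Matrix.mul_diagonal, Matrix.transpose_apply]).symm
  have hPtP : Pᵀ * P = 1 := by
    ext j k
    have h1 : (Pᵀ * P) j k = (star U * U) (e j) (e k) := by
      rw [Matrix.mul_apply, Matrix.mul_apply]
      exact Finset.sum_congr rfl fun i _ => by
        simp [P, Matrix.star_eq_conjTranspose, Matrix.conjTranspose_apply]
    rw [h1, hUU]
    by_cases h : j = k
    · subst h; simp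
    · have : (e j : Fin n) ≠ (e k : Fin n) := by
        simp only [ne_eq, Subtype.coe_inj, EmbeddingLike.apply_eq_iff_eq]
        exact h
      simp [Matrix.one_apply, this, h]
  -- the linear map f ↦ (Tr (Aᵢ * P (symOf f) Pᵀ))ᵢ
  let L : (symIdx r → ℝ) →ₗ[ℝ] (Fin m → ℝ) :=
    { toFun := fun f i => (A i * (P * symOf f * Pᵀ)).trace
      map_add' := fun f g => by
        funext i
        simp only [symOf_add, Matrix.mul_add, Matrix.add_mul, Matrix.trace_add, Pi.add_apply]
      map_smul' := fun c f => by
        funext i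
        simp only [symOf_smul, Matrix.mul_smul, Matrix.smul_mul, Matrix.trace_smul,
          Pi.smul_apply, smul_eq_mul, RingHom.id_apply] }
  have hLinj : Function.Injective L := by
    refine LinearMap.ker_eq_bot.mp (LinearMap.ker_eq_bot'.mpr ?_)
    intro f hf0
    by_contra hfne
    set B : Matrix (Fin r) (Fin r) ℝ := symOf f with hB_def
    have hBne : B ≠ 0 := fun h => hfne (symOf_eq_zero h)
    set Δ : Matrix (Fin n) (Fin n) ℝ := P * B * Pᵀ with hΔ_def
    have hΔne : Δ ≠ 0 := by
      intro h
      apply hBne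
      have hPB : Pᵀ * Δ * P = B := by
        rw [hΔ_def, show Pᵀ * (P * B * Pᵀ) * P = (Pᵀ * P) * B * (Pᵀ * P) by
          simp only [Matrix.mul_assoc], hPtP, Matrix.one_mul, Matrix.mul_one]
      rw [h, Matrix.mul_zero, Matrix.zero_mul] at hPB
      exact hPB.symm
    obtain ⟨v, hv⟩ := Function.ne_iff.mp hfne
    have hrpos : Nonempty (Fin r) := ⟨v.1.1⟩
    have huniv : (Finset.univ : Finset (Fin r)).Nonempty := Finset.univ_nonempty
    set c : ℝ := Finset.univ.inf' huniv D with hc_def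
    have hc_le : ∀ j, c ≤ D j := fun j => Finset.inf'_le _ (Finset.mem_univ j)
    have hc_pos : 0 < c := (Finset.lt_inf'_iff huniv).mpr fun j _ => hDpos j
    set T : ℝ := ∑ i, ∑ j, |B i j| with hT_def
    have hT0 : (0:ℝ) ≤ T :=
      Finset.sum_nonneg fun i _ => Finset.sum_nonneg fun j _ => abs_nonneg _
    set ε : ℝ := c / (T + 1) with hε_def
    have hε : 0 < ε := div_pos hc_pos (by linarith)
    have habs : ∀ t : ℝ, |t| ≤ ε → ∑ i, ∑ j, |(t • B) i j| ≤ c := by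
      intro t ht
      have h1 : ∑ i, ∑ j, |(t • B) i j| = |t| * T := by
        rw [hT_def, Finset.mul_sum]
        refine Finset.sum_congr rfl fun i _ => ?_
        rw [Finset.mul_sum]
        exact Finset.sum_congr rfl fun j _ => by
          rw [Matrix.smul_apply, smul_eq_mul, abs_mul]
      rw [h1]
      have h2 : |t| * T ≤ ε * T := mul_le_mul_of_nonneg_right ht hT0
      have h3 : ε * T ≤ c := by
        rw [hε_def, div_mul_eq_mul_div, div_le_iff₀ (by linarith : (0:ℝ) < T + 1)]
        nlinarith
      linarith
    have hkey : ∀ t : ℝ, |t| ≤ ε →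
        X + t • Δ ∈ {Y : Matrix (Fin n) (Fin n) ℝ |
          Y.PosSemidef ∧ ∀ i, (A i * Y).trace = b i} := by
      intro t ht
      constructor
      · have hsum : X + t • Δ = P * (Matrix.diagonal D + t • B) * Pᵀ := by
          rw [hX_PDP, hΔ_def, Matrix.mul_add, Matrix.add_mul, Matrix.mul_smul,
            Matrix.smul_mul]
        rw [hsum]
        have hBsymm : (t • B)ᵀ = t • B := by
          rw [Matrix.transpose_smul, hB_def, symOf_transpose]
        have hpsd := diagonal_add_posSemidef D (t • B) hBsymm c hc_le (habs t ht)
        have hres := hpsd.mul_mul_conjTranspose_same P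
        rwa [Matrix.conjTranspose_eq_transpose_of_trivial] at hres
      · intro i
        have hL : (A i * Δ).trace = 0 := congrFun hf0 i
        rw [Matrix.mul_add, Matrix.trace_add, hXtr i, Matrix.mul_smul, Matrix.trace_smul,
          hL, smul_zero, add_zero]
    have h1 := hkey ε (by rw [abs_of_pos hε])
    have h2 := hkey (-ε) (by rw [abs_neg, abs_of_pos hε])
    have hseg : X ∈ openSegment ℝ (X + ε • Δ) (X + (-ε) • Δ) := by
      refine ⟨1/2, 1/2, by norm_num, by norm_num, by norm_num, ?_⟩
      module
    have heq := hext h1 h2 hseg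
    have hzero : ε • Δ = 0 := by
      have := heq
      rwa [add_eq_left] at this
    rcases smul_eq_zero.mp hzero with h | h
    · exact hε.ne' h
    · exact hΔne h
  have hcard : Fintype.card (symIdx r) ≤ m := by
    have h1 := LinearMap.finrank_le_finrank_of_injective hLinj
    rwa [Module.finrank_fintype_fun_eq_card, Module.finrank_fintype_fun_eq_card,
      Fintype.card_fin] at h1
  have h2 := two_mul_card_symIdx r
  rw [hrank, ← h2]
  omega
end

section
/- Let A_1,…,A_m be real symmetric n×n matrices, b ∈ ℝ^m, M > 0, and define f(X) = (1/M) log(Σ_{i=1}^m exp(M(Tr(A_iX) − b_i))) on the spectrahedron Δ = {X ∈ S^n : X positive semidefinite, Tr(X) = 1}. Suppose there exists X̂ ∈ Δ with Tr(A_iX̂) ≤ b_i for all i. Then for every ε ≥ 0, any X ∈ Δ with f(X) ≤ inf_{Y ∈ Δ} f(Y) + ε satisfies Tr(A_iX) ≤ b_i + ε + (log m)/M for all i = 1,…,m. -/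
open Matrix


lemma psd_form (n : ℕ) (Y : Matrix (Fin n) (Fin n) ℝ) (hY : Y.PosSemidef)
    (x : Fin n → ℝ) : 0 ≤ x ⬝ᵥ (Y *ᵥ x) := by
  have := hY.dotProduct_mulVec_nonneg x
  simpa using this

lemma psd_diag (n : ℕ) (Y : Matrix (Fin n) (Fin n) ℝ) (hY : Y.PosSemidef) (j : Fin n) :
    0 ≤ Y j j := by
  have := psd_form n Y hY (Pi.single j 1)
  simpa [dotProduct_single, mulVec_single] using this

lemma psd_diag_le_one (n : ℕ) (Y : Matrix (Fin n) (Fin n) ℝ) (hY : Y.PosSemidef)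
    (hTr : Y.trace = 1) (j : Fin n) : Y j j ≤ 1 := by
  rw [← hTr]
  exact Finset.single_le_sum (fun l _ => psd_diag n Y hY l) (Finset.mem_univ j)

lemma psd_entry_abs_le (n : ℕ) (Y : Matrix (Fin n) (Fin n) ℝ) (hY : Y.PosSemidef)
    (hTr : Y.trace = 1) (j k : Fin n) : |Y j k| ≤ 1 := by
  rcases eq_or_ne j k with rfl | hjk
  · rw [abs_of_nonneg (psd_diag n Y hY j)]; exact psd_diag_le_one n Y hY hTr j
  · have hsym : Y k j = Y j k := by
      have := hY.1
      have := congrFun (congrFun this j) k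
      simpa [conjTranspose_apply] using this
    have key : ∀ t : ℝ, 0 ≤ Y j j * (t * t) + (2 * Y j k) * t + Y k k := by
      intro t
      have := psd_form n Y hY (fun l => t * (Pi.single j (1:ℝ) : Fin n → ℝ) l + (Pi.single k (1:ℝ) : Fin n → ℝ) l)
      simp only [dotProduct, mulVec, Pi.single_apply, mul_add, add_mul, mul_ite, ite_mul,
        mul_zero, zero_mul, mul_one, one_mul, Finset.sum_add_distrib, Finset.sum_ite_eq,
        Finset.sum_ite_eq', Finset.mem_univ, if_true, ← Finset.mul_sum] at this
      rw [hsym] at this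
      ring_nf at this ⊢
      linarith
    have hd := discrim_le_zero key
    rw [discrim] at hd
    have h1 : Y j j ≤ 1 := psd_diag_le_one n Y hY hTr j
    have h2 : Y k k ≤ 1 := psd_diag_le_one n Y hY hTr k
    have h3 : 0 ≤ Y j j := psd_diag n Y hY j
    have h4 : 0 ≤ Y k k := psd_diag n Y hY k
    rw [abs_le]
    constructor <;> nlinarith



/-- Hazan's log-sum-exp feasibility penalty
`f(X) = (1/M) log (∑ i, exp (M (Tr(Aᵢ X) - bᵢ)))`. -/
noncomputable def hazanPenalty (n m : ℕ) (A : Fin m → Matrix (Fin n) (Fin n) ℝ)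
    (b : Fin m → ℝ) (M : ℝ) (X : Matrix (Fin n) (Fin n) ℝ) : ℝ :=
  (1 / M) * Real.log (∑ i, Real.exp (M * ((A i * X).trace - b i)))


lemma trace_lb (n m : ℕ) (A : Fin m → Matrix (Fin n) (Fin n) ℝ) (i : Fin m)
    (Y : Matrix (Fin n) (Fin n) ℝ) (hY : Y.PosSemidef) (hYtr : Y.trace = 1) :
    -(∑ j, ∑ k, |A i j k|) ≤ (A i * Y).trace := by
  have htr : (A i * Y).trace = ∑ j, ∑ k, A i j k * Y k j := by
    simp [Matrix.trace, Matrix.mul_apply, Matrix.diag]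
  rw [htr, ← Finset.sum_neg_distrib]
  refine Finset.sum_le_sum fun j _ => ?_
  rw [← Finset.sum_neg_distrib]
  refine Finset.sum_le_sum fun k _ => ?_
  have h1 := psd_entry_abs_le n Y hY hYtr k j
  have h2 : |A i j k * Y k j| ≤ |A i j k| := by
    rw [abs_mul]
    calc |A i j k| * |Y k j| ≤ |A i j k| * 1 := by
          exact mul_le_mul_of_nonneg_left h1 (abs_nonneg _)
      _ = |A i j k| := mul_one _
  linarith [neg_abs_le (A i j k * Y k j)]

lemma penalty_lb (n m : ℕ) (A : Fin m → Matrix (Fin n) (Fin n) ℝ) (b : Fin m → ℝ)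
    (M : ℝ) (hM : 0 < M) (i : Fin m) (Y : Matrix (Fin n) (Fin n) ℝ) :
    (A i * Y).trace - b i ≤ hazanPenalty n m A b M Y := by
  have hS : Real.exp (M * ((A i * Y).trace - b i)) ≤
      ∑ j, Real.exp (M * ((A j * Y).trace - b j)) :=
    Finset.single_le_sum (f := fun j => Real.exp (M * ((A j * Y).trace - b j)))
      (fun j _ => (Real.exp_pos _).le) (Finset.mem_univ i)
  have hlog : M * ((A i * Y).trace - b i) ≤
      Real.log (∑ j, Real.exp (M * ((A j * Y).trace - b j))) := by
    calc M * ((A i * Y).trace - b i)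
        = Real.log (Real.exp (M * ((A i * Y).trace - b i))) := (Real.log_exp _).symm
      _ ≤ _ := Real.log_le_log (Real.exp_pos _) hS
  have h := mul_le_mul_of_nonneg_left hlog (by positivity : (0:ℝ) ≤ 1 / M)
  rw [hazanPenalty]
  calc (A i * Y).trace - b i = (1 / M) * (M * ((A i * Y).trace - b i)) := by
        field_simp
    _ ≤ _ := h

/-- If some `X̂` in the spectrahedron satisfies `Tr(Aᵢ X̂) ≤ bᵢ` for all `i`, then any `X` in the
spectrahedron whose penalty value is within `ε` of the infimum of the penalty over the
spectrahedron satisfies `Tr(Aᵢ X) ≤ bᵢ + ε + (log m)/M` for all `i`. -/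
theorem hazan_penalty_near_minimizer_near_feasible
    (n m : ℕ) (A : Fin m → Matrix (Fin n) (Fin n) ℝ) (hA : ∀ i, (A i).IsSymm)
    (b : Fin m → ℝ) (M : ℝ) (hM : 0 < M)
    (Xhat : Matrix (Fin n) (Fin n) ℝ) (hXhatPSD : Xhat.PosSemidef) (hXhatTr : Xhat.trace = 1)
    (hXhatFeas : ∀ i, (A i * Xhat).trace ≤ b i)
    (ε : ℝ) (hε : 0 ≤ ε)
    (X : Matrix (Fin n) (Fin n) ℝ) (hXPSD : X.PosSemidef) (hXTr : X.trace = 1)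
    (hXnearopt : hazanPenalty n m A b M X ≤
      sInf {t : ℝ | ∃ Y : Matrix (Fin n) (Fin n) ℝ,
        Y.PosSemidef ∧ Y.trace = 1 ∧ t = hazanPenalty n m A b M Y} + ε) :
    ∀ i, (A i * X).trace ≤ b i + ε + Real.log m / M := by
  intro i
  have hne : Nonempty (Fin m) := ⟨i⟩
  have hbdd : BddBelow {t : ℝ | ∃ Y : Matrix (Fin n) (Fin n) ℝ,
      Y.PosSemidef ∧ Y.trace = 1 ∧ t = hazanPenalty n m A b M Y} := by
    refine ⟨-(∑ j, ∑ k, |A i j k|) - b i, fun t ht => ?_⟩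
    obtain ⟨Y, hY1, hY2, rfl⟩ := ht
    have h1 := penalty_lb n m A b M hM i Y
    have h2 := trace_lb n m A i Y hY1 hY2
    linarith
  have hinf : sInf {t : ℝ | ∃ Y : Matrix (Fin n) (Fin n) ℝ,
      Y.PosSemidef ∧ Y.trace = 1 ∧ t = hazanPenalty n m A b M Y}
      ≤ hazanPenalty n m A b M Xhat :=
    csInf_le hbdd ⟨Xhat, hXhatPSD, hXhatTr, rfl⟩
  have hpos : 0 < ∑ j, Real.exp (M * ((A j * Xhat).trace - b j)) :=
    Finset.sum_pos (fun j _ => Real.exp_pos _) Finset.univ_nonempty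
  have hsum : ∑ j, Real.exp (M * ((A j * Xhat).trace - b j)) ≤ (m : ℝ) := by
    calc ∑ j, Real.exp (M * ((A j * Xhat).trace - b j)) ≤ ∑ _j : Fin m, (1 : ℝ) :=
          Finset.sum_le_sum fun j _ => by
            rw [← Real.exp_zero]
            exact Real.exp_le_exp.mpr (by nlinarith [hXhatFeas j])
      _ = (m : ℝ) := by simp
  have hub : hazanPenalty n m A b M Xhat ≤ Real.log m / M := by
    have hlog := Real.log_le_log hpos hsum
    rw [hazanPenalty]
    calc (1 / M) * Real.log (∑ j, Real.exp (M * ((A j * Xhat).trace - b j)))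
        ≤ (1 / M) * Real.log m :=
          mul_le_mul_of_nonneg_left hlog (by positivity)
      _ = Real.log m / M := one_div_mul_eq_div _ _
  have h1 := penalty_lb n m A b M hM i X
  linarith
end
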